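/- Let α > 0, n ∈ ℕ, η ∈ ℝ, and h ∈ (0,1). Then the diagonal value of the Volterra kernel is K_n(η; h, h) = (π/2)·√(p(h)·h·(1−h)); in particular K_n(η; h, h) > 0. -/

import Mathlib

open MeasureTheory Real Polynomial

/-- `p(h) = (α² + h²)/(2h)`. -/
noncomputable def pRad (α h : ℝ) : ℝ := (α ^ 2 + h ^ 2) / (2 * h)

/-- `R(h) = p(h) - h`. -/
noncomputable def RRad (α h : ℝ) : ℝ := pRad α h - h

/-- The Volterra kernel `K_n(η; h, u)`, defined as an integral over `v ∈ (0,1)`,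
with `t = u + v(h - u)`. -/
noncomputable def volterraK (α : ℝ) (n : ℕ) (η h u : ℝ) : ℝ :=
  2 * (1 - u) * ∫ v in Set.Ioo (0 : ℝ) 1,
    ((u + v * (h - u)) * ((u + v * (h - u)) + RRad α h) *
        Real.cos (η * Real.sqrt (pRad α h ^ 2 - ((u + v * (h - u)) + RRad α h) ^ 2)) *
        (Chebyshev.T ℝ (n : ℤ)).eval
          (((1 - u) ^ 2 + 1 - (u + v * (h - u)) ^ 2) / (2 * (1 - u)))) /
      (Real.sqrt v * Real.sqrt (1 - v) *
        Real.sqrt (pRad α h + (u + v * (h - u)) + RRad α h) *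
        Real.sqrt ((u + v * (h - u)) + u) *
        Real.sqrt (2 + (u + v * (h - u)) - u) *
        Real.sqrt (2 - (u + v * (h - u)) - u))

lemma sin_sq_image : (fun θ : ℝ => Real.sin θ ^ 2) '' Set.Ioo 0 (Real.pi/2) = Set.Ioo 0 1 := by
  ext y
  constructor
  · rintro ⟨θ, hθ, rfl⟩
    have hθ2 : θ < Real.pi := lt_of_lt_of_le hθ.2 (by linarith [Real.pi_pos])
    have hs' : 0 < Real.sin θ := Real.sin_pos_of_pos_of_lt_pi hθ.1 hθ2
    have hlt : Real.sin θ < 1 := by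
      have := Real.sin_lt_sin_of_lt_of_le_pi_div_two (x := θ) (y := Real.pi/2)
        (by linarith [Real.pi_pos, hθ.1]) le_rfl hθ.2
      simpa using this
    exact ⟨by simpa using pow_pos hs' 2, by simp only; nlinarith⟩
  · rintro ⟨hy0, hy1⟩
    refine ⟨Real.arcsin (Real.sqrt y), ⟨?_, ?_⟩, ?_⟩
    · exact Real.arcsin_pos.mpr (Real.sqrt_pos.mpr hy0)
    · exact Real.arcsin_lt_pi_div_two.mpr (by rw [show (1:ℝ) = Real.sqrt 1 by simp]; exact Real.sqrt_lt_sqrt (le_of_lt hy0) hy1)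
    · simp only
      rw [Real.sin_arcsin (by linarith [Real.sqrt_nonneg y]) (by rw [show (1:ℝ) = Real.sqrt 1 by simp]; exact le_of_lt (Real.sqrt_lt_sqrt (le_of_lt hy0) hy1)), Real.sq_sqrt (le_of_lt hy0)]

lemma beta_int : ∫ v in Set.Ioo (0:ℝ) 1, 1 / (Real.sqrt v * Real.sqrt (1 - v)) = Real.pi := by
  have hs : MeasurableSet (Set.Ioo 0 (Real.pi/2)) := measurableSet_Ioo
  have hd : ∀ θ ∈ Set.Ioo 0 (Real.pi/2), HasDerivWithinAt (fun θ : ℝ => Real.sin θ ^ 2)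
      (2 * Real.sin θ * Real.cos θ) (Set.Ioo 0 (Real.pi/2)) θ := by
    intro θ _
    have : HasDerivAt (fun θ : ℝ => Real.sin θ ^ 2) (2 * Real.sin θ * Real.cos θ) θ := by
      simpa [mul_comm, mul_assoc, pow_two] using (Real.hasDerivAt_sin θ).fun_pow 2
    exact this.hasDerivWithinAt
  have hinj : Set.InjOn (fun θ : ℝ => Real.sin θ ^ 2) (Set.Ioo 0 (Real.pi/2)) := by
    intro a ha b hb hab
    have h1 : Real.sin a = Real.sin b := by
      have ha' : 0 ≤ Real.sin a := Real.sin_nonneg_of_nonneg_of_le_pi (le_of_lt ha.1)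
        (le_of_lt (lt_of_lt_of_le ha.2 (by linarith [Real.pi_pos])))
      have hb' : 0 ≤ Real.sin b := Real.sin_nonneg_of_nonneg_of_le_pi (le_of_lt hb.1)
        (le_of_lt (lt_of_lt_of_le hb.2 (by linarith [Real.pi_pos])))
      rw [← Real.sqrt_sq ha', ← Real.sqrt_sq hb']
      simp only at hab
      rw [hab]
    exact Real.injOn_sin ⟨by linarith [ha.1, Real.pi_pos], le_of_lt (lt_of_lt_of_le ha.2 (by linarith [Real.pi_pos]))⟩
      ⟨by linarith [hb.1, Real.pi_pos], le_of_lt (lt_of_lt_of_le hb.2 (by linarith [Real.pi_pos]))⟩ h1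
  have himg := sin_sq_image
  rw [← himg, MeasureTheory.integral_image_eq_integral_abs_deriv_smul hs hd hinj]
  have : ∀ θ ∈ Set.Ioo 0 (Real.pi/2),
      |2 * Real.sin θ * Real.cos θ| • (1 / (Real.sqrt (Real.sin θ ^ 2) * Real.sqrt (1 - Real.sin θ ^ 2))) = 2 := by
    intro θ hθ
    have hθ2 : θ < Real.pi := lt_of_lt_of_le hθ.2 (by linarith [Real.pi_pos])
    have hs' : 0 < Real.sin θ := Real.sin_pos_of_pos_of_lt_pi hθ.1 hθ2
    have hc : 0 < Real.cos θ := Real.cos_pos_of_mem_Ioo ⟨by linarith [hθ.1, Real.pi_pos], hθ.2⟩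
    rw [Real.sqrt_sq hs'.le]
    have : (1 : ℝ) - Real.sin θ ^ 2 = Real.cos θ ^ 2 := by
      have := Real.sin_sq_add_cos_sq θ; linarith
    rw [this, Real.sqrt_sq hc.le, abs_of_pos (by positivity)]
    field_simp
    rw [smul_eq_mul, mul_one_div, mul_assoc, mul_div_assoc, div_self (by positivity), mul_one]
  rw [MeasureTheory.setIntegral_congr_fun hs this, MeasureTheory.setIntegral_const,
    Real.volume_real_Ioo_of_le (by linarith [Real.pi_pos]), smul_eq_mul]
  ring



/-- The diagonal value of the Volterra kernel:
`K_n(η; h, h) = (π/2)·√(p(h)·h·(1−h)) > 0`. -/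
theorem volterraK_diag (α : ℝ) (hα : 0 < α) (n : ℕ) (η : ℝ)
    (h : ℝ) (hh : h ∈ Set.Ioo (0 : ℝ) 1) :
    volterraK α n η h h = Real.pi / 2 * Real.sqrt (pRad α h * h * (1 - h)) ∧
      0 < volterraK α n η h h := by
  obtain ⟨hh0, hh1⟩ := hh
  set p := pRad α h with hpdef
  have hp : 0 < p := by
    rw [hpdef, pRad]; positivity
  set s := Real.sqrt (p * h * (1 - h)) with hsdef
  have hphq : 0 < p * h * (1 - h) := mul_pos (mul_pos hp hh0) (by linarith)
  have hs : 0 < s := Real.sqrt_pos.mpr hphq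
  have hs2 : s ^ 2 = p * h * (1 - h) := Real.sq_sqrt hphq.le
  have hT : (Chebyshev.T ℝ (n : ℤ)).eval 1 = 1 := by
    simpa using Chebyshev.T_real_cos (θ := 0) (n := (n : ℤ))
  have hR : h + RRad α h = p := by rw [RRad]; ring
  have hprod : Real.sqrt (p + h + RRad α h) * Real.sqrt (h + h) *
      Real.sqrt (2 + h - h) * Real.sqrt (2 - h - h) = 4 * s := by
    have e1 : p + h + RRad α h = 2 * p := by rw [RRad]; ring
    have e2 : h + h = 2 * h := by ring
    have e3 : 2 + h - h = (2 : ℝ) := by ring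
    have e4 : 2 - h - h = 2 - 2 * h := by ring
    rw [e1, e2, e3, e4, ← Real.sqrt_mul (by positivity), ← Real.sqrt_mul (by positivity),
      ← Real.sqrt_mul (by positivity),
      show 2 * p * (2 * h) * 2 * (2 - 2 * h) = 4 ^ 2 * (p * h * (1 - h)) by ring,
      Real.sqrt_mul (by positivity), Real.sqrt_sq (by norm_num)]
  have key : volterraK α n η h h = 2 * (1 - h) * (h * p / (4 * s) * Real.pi) := by
    rw [volterraK]
    congr 1
    have step1 : (∫ v in Set.Ioo (0:ℝ) 1,
        ((h + v * (h - h)) * ((h + v * (h - h)) + RRad α h) *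
          Real.cos (η * Real.sqrt (pRad α h ^ 2 - ((h + v * (h - h)) + RRad α h) ^ 2)) *
          (Chebyshev.T ℝ (n : ℤ)).eval
            (((1 - h) ^ 2 + 1 - (h + v * (h - h)) ^ 2) / (2 * (1 - h)))) /
        (Real.sqrt v * Real.sqrt (1 - v) *
          Real.sqrt (pRad α h + (h + v * (h - h)) + RRad α h) *
          Real.sqrt ((h + v * (h - h)) + h) *
          Real.sqrt (2 + (h + v * (h - h)) - h) *
          Real.sqrt (2 - (h + v * (h - h)) - h))) =
        ∫ v in Set.Ioo (0:ℝ) 1, h * p / (4 * s) * (1 / (Real.sqrt v * Real.sqrt (1 - v))) := by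
      apply MeasureTheory.setIntegral_congr_fun measurableSet_Ioo
      intro v hv
      obtain ⟨hv0, hv1⟩ := hv
      have hsv : 0 < Real.sqrt v := Real.sqrt_pos.mpr hv0
      have hsv1 : 0 < Real.sqrt (1 - v) := Real.sqrt_pos.mpr (by linarith)
      simp only [sub_self, mul_zero, add_zero]
      rw [hR, sub_self, Real.sqrt_zero, mul_zero, Real.cos_zero,
        show ((1 - h) ^ 2 + 1 - h ^ 2) / (2 * (1 - h)) = 1 by
          rw [div_eq_one_iff_eq (by intro hc; nlinarith)]; ring, hT]
      rw [show Real.sqrt v * Real.sqrt (1 - v) * Real.sqrt (p + h + RRad α h) *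
          Real.sqrt (h + h) * Real.sqrt (2 + h - h) * Real.sqrt (2 - h - h) =
          Real.sqrt v * Real.sqrt (1 - v) * (Real.sqrt (p + h + RRad α h) *
          Real.sqrt (h + h) * Real.sqrt (2 + h - h) * Real.sqrt (2 - h - h)) by ring, hprod]
      field_simp
    rw [step1, MeasureTheory.integral_const_mul, beta_int]
  have final : 2 * (1 - h) * (h * p / (4 * s) * Real.pi) = Real.pi / 2 * s := by
    field_simp [hs.ne']
    nlinarith [hs2, Real.pi_pos]
  constructor
  · rw [key, final]
  · rw [key, final]
    positivity
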